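/- Rationality of the generating function: let p be a prime and P ∈ 𝔽_p[x]. Define c(k) := Σ_{j≥0} val(coeff(P^{p^k−1}, j)), where val : 𝔽_p → {0,…,p−1} ⊂ ℤ is the canonical lift. Then the formal power series Σ_{k≥0} c(k)·t^k ∈ ℚ⟦t⟧ is a rational function: there exist polynomials q, r ∈ ℚ[t] with constant term of r nonzero such that r·Σ_{k≥0} c(k)·t^k = q in ℚ⟦t⟧. -/

import Mathlib

open Polynomial

/-- `c(k) = Σ_j val(coeff(P^{pᵏ-1}, j))`, i.e. `P^{pᵏ-1} mod p` with coefficients lifted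
to `{0, …, p-1} ⊂ ℤ` and then evaluated at `x = 1`. -/
noncomputable def cSeq (p : ℕ) (P : (ZMod p)[X]) (k : ℕ) : ℕ :=
  ∑ j ∈ (P ^ (p ^ k - 1)).support, ((P ^ (p ^ k - 1)).coeff j).val

namespace GFR

section
variable {p : ℕ}

/-- Coefficient of `f * expand m g`. -/
lemma coeff_mul_expand (f g : (ZMod p)[X]) (m : ℕ) (hm : 0 < m) (n : ℕ) :
    (f * expand (ZMod p) m g).coeff n
      = ∑ j ∈ Finset.range (n / m + 1), g.coeff j * f.coeff (n - j * m) := by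
  rw [mul_comm, coeff_mul, Finset.Nat.sum_antidiagonal_eq_sum_range_succ_mk]
  have key : ∀ y ∈ Finset.range (n + 1),
      (expand (ZMod p) m g).coeff y * f.coeff (n - y)
        = if m ∣ y then g.coeff (y / m) * f.coeff (n - y) else 0 := by
    intro y _
    rw [coeff_expand hm]
    split <;> simp
  rw [Finset.sum_congr rfl key]
  have himg : (Finset.range (n / m + 1)).image (· * m) ⊆ Finset.range (n + 1) := by
    intro y hy
    obtain ⟨j, hj, rfl⟩ := Finset.mem_image.mp hy
    simp only [Finset.mem_range, Nat.lt_succ_iff] at hj ⊢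
    calc j * m ≤ (n / m) * m := Nat.mul_le_mul_right _ hj
      _ ≤ n := Nat.div_mul_le_self _ _
  have hvan : ∀ y ∈ Finset.range (n + 1),
      y ∉ (Finset.range (n / m + 1)).image (· * m) →
      (if m ∣ y then g.coeff (y / m) * f.coeff (n - y) else 0) = 0 := by
    intro y hy hni
    rw [if_neg]
    rintro ⟨j, rfl⟩
    apply hni
    apply Finset.mem_image.mpr
    refine ⟨j, ?_, by ring⟩
    simp only [Finset.mem_range, Nat.lt_succ_iff] at hy ⊢
    exact Nat.le_div_iff_mul_le hm |>.mpr (by rw [mul_comm] at hy; omega)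
  rw [← Finset.sum_subset himg hvan, Finset.sum_image
    (fun a _ b _ h => Nat.eq_of_mul_eq_mul_right hm h)]
  apply Finset.sum_congr rfl
  intro j _
  rw [if_pos ⟨j, mul_comm j m⟩, Nat.mul_div_cancel _ hm]



end

variable (p : ℕ) [hF : Fact p.Prime] (P : (ZMod p)[X])

/-- Block count bound. -/
def D : ℕ := P.natDegree + 1

noncomputable def R' : (ZMod p)[X] := P ^ (p - 1)

/-- `g ^ (p^k) = expand (p^k) g` over `ZMod p`. -/
lemma pow_pk (g : (ZMod p)[X]) (k : ℕ) : g ^ (p ^ k) = expand (ZMod p) (p ^ k) g := by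
  induction k with
  | zero => simp
  | succ k ih =>
    rw [pow_succ, pow_mul, ih, ← ZMod.expand_card, expand_expand, mul_comm]

lemma Qsucc (k : ℕ) :
    P ^ (p ^ (k + 1) - 1) = P ^ (p ^ k - 1) * expand (ZMod p) (p ^ k) (R' p P) := by
  rw [R', ← pow_pk, ← pow_mul, ← pow_add]
  congr 1
  have h1 : 1 ≤ p ^ k := Nat.one_le_pow _ _ hF.out.pos
  have h2 : p ^ (k + 1) = p * p ^ k := by ring
  have h3 : 2 ≤ p := hF.out.two_le
  have : (p - 1) * p ^ k = p * p ^ k - p ^ k := by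
    rw [Nat.sub_mul, one_mul]
  rw [this, h2]
  have h4 : p ^ k ≤ p * p ^ k := Nat.le_mul_of_pos_left _ hF.out.pos
  omega

lemma natDeg_Q_lt (k : ℕ) : (P ^ (p ^ k - 1)).natDegree < D p P * p ^ k := by
  have h1 := natDegree_pow_le (p := P) (n := p ^ k - 1)
  have hpk : 0 < p ^ k := Nat.pow_pos hF.out.pos
  have : (p ^ k - 1) * P.natDegree < D p P * p ^ k := by
    calc (p ^ k - 1) * P.natDegree ≤ p ^ k * P.natDegree :=
          Nat.mul_le_mul_right _ (Nat.sub_le _ _)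
      _ < p ^ k * P.natDegree + p ^ k := by omega
      _ = (P.natDegree + 1) * p ^ k := by ring
      _ = D p P * p ^ k := rfl
  omega

lemma coeff_Q_zero {k u t : ℕ} (ht : t < p ^ k) (hu : D p P ≤ u) :
    (P ^ (p ^ k - 1)).coeff (t + u * p ^ k) = 0 := by
  apply coeff_eq_zero_of_natDegree_lt
  have h1 := natDeg_Q_lt p P k
  have h2 : D p P * p ^ k ≤ u * p ^ k := Nat.mul_le_mul_right _ hu
  omega




/-- The state of column `t` at time `k`: the vector of coefficients of `P^(p^k-1)`
at positions `t + i * p^k`, `i < D`. -/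
noncomputable def fvec (k t : ℕ) : Fin (D p P) → ZMod p :=
  fun i => (P ^ (p ^ k - 1)).coeff (t + (i : ℕ) * p ^ k)

/-- The transition map on states, one for each digit `a < p`. -/
noncomputable def Mmap (a : ℕ) (v : Fin (D p P) → ZMod p) : Fin (D p P) → ZMod p :=
  fun i => ∑ u : Fin (D p P),
    (if (u : ℕ) ≤ a + (i : ℕ) * p then (R' p P).coeff (a + (i : ℕ) * p - u) else 0) * v u

lemma step (k t a : ℕ) (ht : t < p ^ k) :
    fvec p P (k + 1) (a * p ^ k + t) = Mmap p P a (fvec p P k t) := by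
  funext i
  have hm : 0 < p ^ k := Nat.pow_pos hF.out.pos
  have hidx : a * p ^ k + t + (i : ℕ) * p ^ (k + 1)
      = t + (a + (i : ℕ) * p) * p ^ k := by rw [pow_succ]; ring
  have hdiv : (t + (a + (i : ℕ) * p) * p ^ k) / p ^ k = a + (i : ℕ) * p := by
    rw [Nat.add_mul_div_right _ _ hm, Nat.div_eq_of_lt ht, Nat.zero_add]
  have h1 : fvec p P (k + 1) (a * p ^ k + t) i
      = ∑ j ∈ Finset.range (a + (i : ℕ) * p + 1), (R' p P).coeff j
          * (P ^ (p ^ k - 1)).coeff (t + (a + (i : ℕ) * p - j) * p ^ k) := by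
    show (P ^ (p ^ (k + 1) - 1)).coeff (a * p ^ k + t + (i : ℕ) * p ^ (k + 1)) = _
    rw [hidx, Qsucc p P k, coeff_mul_expand (hm := hm), hdiv]
    apply Finset.sum_congr rfl
    intro j hj
    simp only [Finset.mem_range, Nat.lt_succ_iff] at hj
    have e1 : (a + (i : ℕ) * p - j) * p ^ k
        = (a + (i : ℕ) * p) * p ^ k - j * p ^ k := Nat.sub_mul _ _ _
    have e2 : j * p ^ k ≤ (a + (i : ℕ) * p) * p ^ k := Nat.mul_le_mul_right _ hj
    have e3 : t + (a + (i : ℕ) * p) * p ^ k - j * p ^ k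
        = t + (a + (i : ℕ) * p - j) * p ^ k := by omega
    rw [e3]
  have h2 : ∑ j ∈ Finset.range (a + (i : ℕ) * p + 1), (R' p P).coeff j
          * (P ^ (p ^ k - 1)).coeff (t + (a + (i : ℕ) * p - j) * p ^ k)
      = ∑ u ∈ Finset.range (a + (i : ℕ) * p + 1), (R' p P).coeff (a + (i : ℕ) * p - u)
          * (P ^ (p ^ k - 1)).coeff (t + u * p ^ k) := by
    rw [← Finset.sum_range_reflect]
    apply Finset.sum_congr rfl
    intro u hu
    simp only [Finset.mem_range, Nat.lt_succ_iff] at hu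
    have e1 : a + (i : ℕ) * p + 1 - 1 - u = a + (i : ℕ) * p - u := by omega
    have e2 : a + (i : ℕ) * p - (a + (i : ℕ) * p - u) = u := by omega
    rw [e1, e2]
  have hgoal : Mmap p P a (fvec p P k t) i
      = ∑ u ∈ Finset.range (D p P),
          (if u ≤ a + (i : ℕ) * p then (R' p P).coeff (a + (i : ℕ) * p - u) else 0)
            * (P ^ (p ^ k - 1)).coeff (t + u * p ^ k) :=
    Fin.sum_univ_eq_sum_range
      (fun u => (if u ≤ a + (i : ℕ) * p then (R' p P).coeff (a + (i : ℕ) * p - u) else 0)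
        * (P ^ (p ^ k - 1)).coeff (t + u * p ^ k)) (D p P)
  rw [h1, h2, hgoal]
  have hL1 : ∑ u ∈ Finset.range (a + (i : ℕ) * p + 1), (R' p P).coeff (a + (i : ℕ) * p - u)
          * (P ^ (p ^ k - 1)).coeff (t + u * p ^ k)
      = ∑ u ∈ Finset.range (a + (i : ℕ) * p + 1),
          (if u ≤ a + (i : ℕ) * p then (R' p P).coeff (a + (i : ℕ) * p - u) else 0)
            * (P ^ (p ^ k - 1)).coeff (t + u * p ^ k) := by
    apply Finset.sum_congr rfl
    intro u hu
    simp only [Finset.mem_range, Nat.lt_succ_iff] at hu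
    rw [if_pos hu]
  rw [hL1]
  have hL2 : ∑ u ∈ Finset.range (a + (i : ℕ) * p + 1),
          (if u ≤ a + (i : ℕ) * p then (R' p P).coeff (a + (i : ℕ) * p - u) else 0)
            * (P ^ (p ^ k - 1)).coeff (t + u * p ^ k)
      = ∑ u ∈ Finset.range (a + (i : ℕ) * p + 1 + D p P),
          (if u ≤ a + (i : ℕ) * p then (R' p P).coeff (a + (i : ℕ) * p - u) else 0)
            * (P ^ (p ^ k - 1)).coeff (t + u * p ^ k) := by
    apply Finset.sum_subset (Finset.range_subset_range.mpr (by omega))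
    intro u hu1 hu2
    simp only [Finset.mem_range, Nat.lt_succ_iff] at hu2
    rw [if_neg (by omega), zero_mul]
  have hR : ∑ u ∈ Finset.range (D p P),
          (if u ≤ a + (i : ℕ) * p then (R' p P).coeff (a + (i : ℕ) * p - u) else 0)
            * (P ^ (p ^ k - 1)).coeff (t + u * p ^ k)
      = ∑ u ∈ Finset.range (a + (i : ℕ) * p + 1 + D p P),
          (if u ≤ a + (i : ℕ) * p then (R' p P).coeff (a + (i : ℕ) * p - u) else 0)
            * (P ^ (p ^ k - 1)).coeff (t + u * p ^ k) := by
    apply Finset.sum_subset (Finset.range_subset_range.mpr (by omega))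
    intro u hu1 hu2
    simp only [Finset.mem_range, not_lt] at hu2
    rw [coeff_Q_zero p P ht hu2, mul_zero]
  rw [hL2, hR]


section
variable {M : Type*} [AddCommMonoid M]

/-- Splitting a sum over `range (m * n)` into blocks. -/
lemma sum_range_mul (g : ℕ → M) (m n : ℕ) :
    ∑ j ∈ Finset.range (m * n), g j
      = ∑ i ∈ Finset.range m, ∑ t ∈ Finset.range n, g (i * n + t) := by
  induction m with
  | zero => simp
  | succ m ih =>
    rw [Finset.sum_range_succ, ← ih]
    have h : (m + 1) * n = m * n + n := Nat.succ_mul m n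
    rw [h]
    simp only [Finset.range_eq_Ico]
    rw [← Finset.sum_Ico_consecutive g (Nat.zero_le (m * n)) (Nat.le_add_right (m * n) n)]
    congr 1
    rw [Finset.sum_Ico_eq_sum_range]
    simp only [Nat.add_sub_cancel_left, Finset.range_eq_Ico]

end

variable (p : ℕ) [hF : Fact p.Prime] (P : (ZMod p)[X])

/-- The weight of a state. -/
noncomputable def wS (v : Fin (D p P) → ZMod p) : ℕ := ∑ i, (v i).val

/-- number of columns in state `v` at time `k`. -/
noncomputable def Nv (k : ℕ) (v : Fin (D p P) → ZMod p) : ℕ :=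
  ((Finset.range (p ^ k)).filter (fun t => fvec p P k t = v)).card

/-- number of digits `a < p` taking state `v` to state `v'`. -/
noncomputable def cnt (v v' : Fin (D p P) → ZMod p) : ℕ :=
  ((Finset.range p).filter (fun a => Mmap p P a v = v')).card

lemma csum (k : ℕ) : cSeq p P k = ∑ t ∈ Finset.range (p ^ k), wS p P (fvec p P k t) := by
  have hQ := natDeg_Q_lt p P k
  have h1 : cSeq p P k
      = ∑ j ∈ Finset.range (D p P * p ^ k), ((P ^ (p ^ k - 1)).coeff j).val := by
    rw [cSeq]
    apply Finset.sum_subset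
    · intro j hj
      rw [Finset.mem_range]
      exact lt_of_le_of_lt (le_natDegree_of_mem_supp _ hj) hQ
    · intro j _ hj
      rw [notMem_support_iff.mp hj, ZMod.val_zero]
  rw [h1, sum_range_mul, Finset.sum_comm]
  apply Finset.sum_congr rfl
  intro t ht
  have h2 : wS p P (fvec p P k t)
      = ∑ i ∈ Finset.range (D p P), ((P ^ (p ^ k - 1)).coeff (t + i * p ^ k)).val :=
    Fin.sum_univ_eq_sum_range
      (fun i => ((P ^ (p ^ k - 1)).coeff (t + i * p ^ k)).val) (D p P)
  rw [h2]
  apply Finset.sum_congr rfl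
  intro i _
  rw [add_comm (i * p ^ k) t]

lemma c_eq (k : ℕ) :
    cSeq p P k = ∑ v : (Fin (D p P) → ZMod p), Nv p P k v * wS p P v := by
  rw [csum, ← Finset.sum_fiberwise' (Finset.range (p ^ k)) (fvec p P k) (wS p P)]
  apply Finset.sum_congr rfl
  intro v _
  rw [Finset.sum_const, Nv, smul_eq_mul]

lemma N_succ (k : ℕ) (v' : Fin (D p P) → ZMod p) :
    Nv p P (k + 1) v' = ∑ v : (Fin (D p P) → ZMod p), Nv p P k v * cnt p P v v' := by
  have h1 : Nv p P (k + 1) v'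
      = ∑ t' ∈ Finset.range (p ^ (k + 1)), if fvec p P (k + 1) t' = v' then 1 else 0 :=
    Finset.card_filter _ _
  have hpow : p ^ (k + 1) = p * p ^ k := pow_succ' p k
  rw [h1, hpow, sum_range_mul (fun t' => if fvec p P (k + 1) t' = v' then 1 else 0) p (p ^ k)]
  have h2 : ∀ a ∈ Finset.range p, ∀ t ∈ Finset.range (p ^ k),
      (if fvec p P (k + 1) (a * p ^ k + t) = v' then 1 else 0)
        = if Mmap p P a (fvec p P k t) = v' then 1 else 0 := by
    intro a _ t ht
    rw [step p P k t a (Finset.mem_range.mp ht)]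
  rw [Finset.sum_congr rfl (fun a ha => Finset.sum_congr rfl (h2 a ha)), Finset.sum_comm]
  have h3 : ∀ t ∈ Finset.range (p ^ k),
      (∑ a ∈ Finset.range p, if Mmap p P a (fvec p P k t) = v' then 1 else 0)
        = cnt p P (fvec p P k t) v' := by
    intro t _
    exact (Finset.card_filter _ _).symm
  rw [Finset.sum_congr rfl h3,
    ← Finset.sum_fiberwise' (Finset.range (p ^ k)) (fvec p P k) (fun v => cnt p P v v')]
  apply Finset.sum_congr rfl
  intro v _
  rw [Finset.sum_const, Nv, smul_eq_mul]



/-- The transition matrix over `ℚ`. -/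
noncomputable def T : Matrix (Fin (D p P) → ZMod p) (Fin (D p P) → ZMod p) ℚ :=
  fun v' v => (cnt p P v v' : ℚ)

/-- The counting vector over `ℚ`. -/
noncomputable def xv (k : ℕ) : (Fin (D p P) → ZMod p) → ℚ := fun v => (Nv p P k v : ℚ)

lemma xv_succ (k : ℕ) : xv p P (k + 1) = (T p P).mulVec (xv p P k) := by
  funext v'
  show ((Nv p P (k + 1) v' : ℕ) : ℚ) = ∑ v, T p P v' v * xv p P k v
  rw [N_succ]
  push_cast
  apply Finset.sum_congr rfl
  intro v _
  rw [T, xv, mul_comm]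

lemma xv_pow (k : ℕ) : xv p P k = ((T p P) ^ k).mulVec (xv p P 0) := by
  induction k with
  | zero => rw [pow_zero, Matrix.one_mulVec]
  | succ k ih =>
    rw [xv_succ, ih, Matrix.mulVec_mulVec, ← pow_succ']

lemma c_matrix (k : ℕ) :
    (cSeq p P k : ℚ)
      = dotProduct (fun v => (wS p P v : ℚ)) (((T p P) ^ k).mulVec (xv p P 0)) := by
  rw [← xv_pow, c_eq]
  push_cast
  rw [dotProduct]
  apply Finset.sum_congr rfl
  intro v _
  rw [xv, mul_comm]

lemma recurrence (k : ℕ) :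
    ∑ i ∈ Finset.range ((T p P).charpoly.natDegree + 1),
      (T p P).charpoly.coeff i * (cSeq p P (k + i) : ℚ) = 0 := by
  set y : (Fin (D p P) → ZMod p) → ℚ := ((T p P) ^ k).mulVec (xv p P 0) with hy
  -- the linear functional M ↦ w ⬝ᵥ (M *ᵥ y)
  let Φ : Matrix (Fin (D p P) → ZMod p) (Fin (D p P) → ZMod p) ℚ →ₗ[ℚ] ℚ :=
    { toFun := fun M => dotProduct (fun v => (wS p P v : ℚ)) (M.mulVec y)
      map_add' := fun M N => by
        rw [Matrix.add_mulVec, dotProduct_add]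
      map_smul' := fun c M => by
        rw [Matrix.smul_mulVec, dotProduct_smul, smul_eq_mul, smul_eq_mul, RingHom.id_apply] }
  have hterm : ∀ i, (cSeq p P (k + i) : ℚ) = Φ ((T p P) ^ i) := by
    intro i
    rw [c_matrix]
    show _ = dotProduct _ (((T p P) ^ i).mulVec y)
    rw [hy, Matrix.mulVec_mulVec, ← pow_add, add_comm i k]
  have hCH : ∑ i ∈ Finset.range ((T p P).charpoly.natDegree + 1),
      (T p P).charpoly.coeff i • (T p P) ^ i = 0 := by
    rw [← Polynomial.aeval_eq_sum_range]
    exact Matrix.aeval_self_charpoly _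
  calc ∑ i ∈ Finset.range ((T p P).charpoly.natDegree + 1),
        (T p P).charpoly.coeff i * (cSeq p P (k + i) : ℚ)
      = ∑ i ∈ Finset.range ((T p P).charpoly.natDegree + 1),
        (T p P).charpoly.coeff i • Φ ((T p P) ^ i) := by
        apply Finset.sum_congr rfl
        intro i _
        rw [hterm i, smul_eq_mul]
    _ = Φ (∑ i ∈ Finset.range ((T p P).charpoly.natDegree + 1),
        (T p P).charpoly.coeff i • (T p P) ^ i) := by
        rw [map_sum]
        apply Finset.sum_congr rfl
        intro i _
        rw [map_smul, smul_eq_mul]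
    _ = 0 := by rw [hCH, map_zero]


end GFR

theorem genfun_rational (p : ℕ) (hp : p.Prime) (P : (ZMod p)[X]) :
    ∃ q r : Polynomial ℚ, r.coeff 0 ≠ 0 ∧
      (r : PowerSeries ℚ) * PowerSeries.mk (fun k => (cSeq p P k : ℚ)) =
        (q : PowerSeries ℚ) := by
  haveI : Fact p.Prime := ⟨hp⟩
  set χ : Polynomial ℚ := (GFR.T p P).charpoly with hχ
  set n : ℕ := χ.natDegree with hn
  set F : PowerSeries ℚ := PowerSeries.mk (fun k => (cSeq p P k : ℚ)) with hFdef
  set r : Polynomial ℚ := χ.reverse with hrdef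
  refine ⟨PowerSeries.trunc n ((r : PowerSeries ℚ) * F), r, ?_, ?_⟩
  · rw [hrdef, Polynomial.coeff_zero_reverse, (Matrix.charpoly_monic (GFR.T p P)).leadingCoeff]
    exact one_ne_zero
  · ext m
    rw [Polynomial.coeff_coe, PowerSeries.coeff_trunc]
    split
    · rfl
    · rename_i hmn
      push_neg at hmn
      rw [PowerSeries.coeff_mul, Finset.Nat.sum_antidiagonal_eq_sum_range_succ_mk]
      have hsub : ∑ i ∈ Finset.range (m + 1),
            (PowerSeries.coeff i) (r : PowerSeries ℚ) * (PowerSeries.coeff (m - i)) F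
          = ∑ i ∈ Finset.range (n + 1),
            (PowerSeries.coeff i) (r : PowerSeries ℚ) * (PowerSeries.coeff (m - i)) F := by
        symm
        apply Finset.sum_subset (Finset.range_subset_range.mpr (by omega))
        intro i _ hi
        simp only [Finset.mem_range, Nat.lt_succ_iff, not_le] at hi
        rw [Polynomial.coeff_coe, Polynomial.coeff_eq_zero_of_natDegree_lt, zero_mul]
        exact lt_of_le_of_lt (Polynomial.reverse_natDegree_le χ) hi
      rw [hsub]
      have hterm : ∀ i ∈ Finset.range (n + 1),
          (PowerSeries.coeff i) (r : PowerSeries ℚ) * (PowerSeries.coeff (m - i)) F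
            = χ.coeff (n - i) * (cSeq p P (m - i) : ℚ) := by
        intro i hi
        simp only [Finset.mem_range, Nat.lt_succ_iff] at hi
        rw [Polynomial.coeff_coe, hrdef, Polynomial.coeff_reverse, Polynomial.revAt_le hi,
          hFdef, PowerSeries.coeff_mk]
      rw [Finset.sum_congr rfl hterm, ← Finset.sum_range_reflect]
      have hterm2 : ∀ j ∈ Finset.range (n + 1),
          χ.coeff (n - (n + 1 - 1 - j)) * (cSeq p P (m - (n + 1 - 1 - j)) : ℚ)
            = χ.coeff j * (cSeq p P (m - n + j) : ℚ) := by
        intro j hj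
        simp only [Finset.mem_range, Nat.lt_succ_iff] at hj
        have e1 : n - (n + 1 - 1 - j) = j := by omega
        have e2 : m - (n + 1 - 1 - j) = m - n + j := by omega
        rw [e1, e2]
      rw [Finset.sum_congr rfl hterm2]
      exact GFR.recurrence p P (m - n)
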